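/- For any integer r ≥ 2: ∑_{n=0}^∞ 1 / (F_{2^r n + 2^{r-1}} · Φ^{2^r n + 2^{r-1}}) = ∑_{n=1}^∞ 1 / F_{2^r n}. -/

import Mathlib

open Filter Finset Topology

/-- The golden ratio `Φ = (1 + √5)/2`. -/
noncomputable def Phi : ℝ := (1 + Real.sqrt 5) / 2

section Aux

open Real goldenRatio

private lemma phi_eq : Phi = goldenRatio := rfl

private lemma one_lt_phi : 1 < Phi := phi_eq ▸ one_lt_goldenRatio

private lemma phi_pos : 0 < Phi := lt_trans one_pos one_lt_phi

private lemma phi_sq : Phi ^ 2 = Phi + 1 := phi_eq ▸ goldenRatio_sq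

/-- Lower bound `Φ ^ n ≤ fib (n + 2)`. -/
private lemma fib_lower : ∀ n : ℕ, Phi ^ n ≤ (Nat.fib (n + 2) : ℝ) := by
  intro n
  induction n using Nat.twoStepInduction with
  | zero => norm_num
  | one =>
    have h5 : Real.sqrt 5 ≤ 3 := by
      rw [show (3:ℝ) = Real.sqrt 9 by
        rw [show (9:ℝ) = 3^2 by norm_num, Real.sqrt_sq (by norm_num)]]
      exact Real.sqrt_le_sqrt (by norm_num)
    rw [show Nat.fib 3 = 2 from rfl, pow_one, Phi]
    push_cast
    linarith
  | more n ih1 ih2 =>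
    have hexp : Phi ^ (n + 2) = Phi ^ n + Phi ^ (n + 1) := by
      have : Phi ^ (n + 2) = Phi ^ n * Phi ^ 2 := by ring
      rw [this, phi_sq]; ring
    have hfib : Nat.fib (n + 2 + 2) = Nat.fib (n + 2) + Nat.fib (n + 2 + 1) :=
      Nat.fib_add_two
    rw [hexp, hfib]
    push_cast
    have : n + 2 + 1 = n + 1 + 2 := by ring
    rw [this]
    exact add_le_add ih1 ih2

/-- For even `k`, `ψ^k = (φ^k)⁻¹`. -/
private lemma fib_mul_phi (k : ℕ) (hk : Even k) :
    (Nat.fib k : ℝ) * Phi ^ k = ((Phi ^ k) ^ 2 - 1) / Real.sqrt 5 := by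
  have hψ : goldenConj ^ k * goldenRatio ^ k = 1 := by
    rw [← mul_pow, goldenConj_mul_goldenRatio]
    exact hk.neg_one_pow
  have h5 : Real.sqrt 5 ≠ 0 := by positivity
  have hφ : goldenRatio ^ k ≠ 0 := pow_ne_zero _ goldenRatio_ne_zero
  rw [phi_eq, Real.coe_fib_eq, div_mul_eq_mul_div, sub_mul, hψ, sq]

private lemma phi_pow_pos (k : ℕ) : 0 < Phi ^ k := pow_pos phi_pos k

private lemma one_lt_phi_pow {k : ℕ} (hk : 0 < k) : 1 < Phi ^ k :=
  one_lt_pow₀ one_lt_phi hk.ne'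

/-- Key step: `1/(F_k Φ^k) = 1/F_{2k} + 1/(F_{2k} Φ^{2k})` for even positive `k`. -/
private lemma key_step (k : ℕ) (hk : Even k) (hk0 : 0 < k) :
    1 / ((Nat.fib k : ℝ) * Phi ^ k)
      = 1 / (Nat.fib (2 * k) : ℝ) + 1 / ((Nat.fib (2 * k) : ℝ) * Phi ^ (2 * k)) := by
  have hy : 1 < Phi ^ k := one_lt_phi_pow hk0
  set y : ℝ := Phi ^ k with hydef
  have hP2 : Phi ^ (2 * k) = y ^ 2 := by rw [hydef, ← pow_mul, mul_comm]
  have hA : (Nat.fib k : ℝ) * y = (y ^ 2 - 1) / Real.sqrt 5 := fib_mul_phi k hk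
  have hB : (Nat.fib (2 * k) : ℝ) * y ^ 2 = ((y ^ 2) ^ 2 - 1) / Real.sqrt 5 := by
    have := fib_mul_phi (2 * k) (even_two_mul k)
    rwa [hP2] at this
  have h5 : (0:ℝ) < Real.sqrt 5 := by positivity
  have hy0 : (0:ℝ) < y := lt_trans one_pos hy
  have hy2 : (1:ℝ) < y ^ 2 := one_lt_pow₀ hy (by norm_num)
  have hy4 : (1:ℝ) < (y ^ 2) ^ 2 := one_lt_pow₀ hy2 (by norm_num)
  have hfib2k : (Nat.fib (2 * k) : ℝ) = ((y ^ 2) ^ 2 - 1) / (Real.sqrt 5 * y ^ 2) := by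
    field_simp at hB ⊢
    linarith [hB]
  have h1 : y ^ 2 - 1 ≠ 0 := by nlinarith
  have h2 : (y ^ 2) ^ 2 - 1 ≠ 0 := by nlinarith
  rw [hA, hP2, hfib2k]
  field_simp
  ring_nf
  rw [← sub_one_mul, show y ^ 4 - 1 = -1 + y ^ 4 by ring, mul_inv_cancel₀ (ne_of_gt (by nlinarith))]

end Aux

/-- Tail sum: for even positive `k`,
`∑_j 1/F_{2^{j+1} k} = 1/(F_k Φ^k)`. -/
private lemma tail_hasSum (k : ℕ) (hk : Even k) (hk0 : 0 < k) :
    HasSum (fun j : ℕ => 1 / (Nat.fib (2 ^ (j + 1) * k) : ℝ))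
      (1 / ((Nat.fib k : ℝ) * Phi ^ k)) := by
  set t : ℕ → ℝ := fun j => 1 / ((Nat.fib (2 ^ j * k) : ℝ) * Phi ^ (2 ^ j * k)) with ht
  have hstep : ∀ j : ℕ, 1 / (Nat.fib (2 ^ (j + 1) * k) : ℝ) = t j - t (j + 1) := by
    intro j
    have h1 : Even (2 ^ j * k) := hk.mul_left _
    have h2 : 0 < 2 ^ j * k := Nat.mul_pos (Nat.pow_pos two_pos) hk0
    have hks := key_step (2 ^ j * k) h1 h2
    have e : 2 * (2 ^ j * k) = 2 ^ (j + 1) * k := by ring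
    rw [e] at hks
    simp only [ht] at *
    rw [hks]
    ring
  have htnonneg : ∀ j, 0 ≤ t j := fun j =>
    div_nonneg zero_le_one (mul_nonneg (Nat.cast_nonneg _) (phi_pow_pos _).le)
  have htend : Tendsto t atTop (𝓝 0) := by
    have hb : ∀ j : ℕ, t j ≤ (Phi⁻¹) ^ j := by
      intro j
      have hm : j ≤ 2 ^ j * k := le_trans (Nat.lt_two_pow_self (n := j)).le (Nat.le_mul_of_pos_right _ hk0)
      have hfib1 : (1 : ℝ) ≤ (Nat.fib (2 ^ j * k) : ℝ) := by
        have : 0 < Nat.fib (2 ^ j * k) := Nat.fib_pos.mpr (Nat.mul_pos (Nat.pow_pos two_pos) hk0)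
        exact_mod_cast this
      have hpow : Phi ^ j ≤ Phi ^ (2 ^ j * k) := pow_le_pow_right₀ one_lt_phi.le hm
      have hd : Phi ^ j ≤ (Nat.fib (2 ^ j * k) : ℝ) * Phi ^ (2 ^ j * k) := by
        calc Phi ^ j ≤ Phi ^ (2 ^ j * k) := hpow
        _ ≤ (Nat.fib (2 ^ j * k) : ℝ) * Phi ^ (2 ^ j * k) := by
            nlinarith [phi_pow_pos (2 ^ j * k)]
      have := one_div_le_one_div_of_le (phi_pow_pos j) hd
      simpa [ht, inv_pow, one_div] using this
    have hgeo : Tendsto (fun j : ℕ => (Phi⁻¹) ^ j) atTop (𝓝 0) :=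
      tendsto_pow_atTop_nhds_zero_of_lt_one (inv_nonneg.mpr phi_pos.le) (inv_lt_one_of_one_lt₀ one_lt_phi)
    exact squeeze_zero htnonneg hb hgeo
  have hval : t 0 = 1 / ((Nat.fib k : ℝ) * Phi ^ k) := by simp [ht]
  rw [hasSum_iff_tendsto_nat_of_nonneg (fun j => by positivity)]
  have : ∀ n : ℕ, ∑ i ∈ Finset.range n, 1 / (Nat.fib (2 ^ (i + 1) * k) : ℝ) = t 0 - t n := by
    intro n
    rw [Finset.sum_congr rfl fun i _ => hstep i]
    exact Finset.sum_range_sub' t n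
  simp only [this]
  rw [← hval]
  simpa using tendsto_const_nhds.sub htend

/-- Injectivity of `(n, j) ↦ 2^j (2n+1)`. -/
private lemma e_inj_aux : ∀ j1 : ℕ, ∀ j2 n1 n2 : ℕ,
    2 ^ j1 * (2 * n1 + 1) = 2 ^ j2 * (2 * n2 + 1) → j1 = j2 ∧ n1 = n2 := by
  intro j1
  induction j1 with
  | zero =>
    intro j2 n1 n2 h
    cases j2 with
    | zero => simp at h; omega
    | succ s =>
      rw [pow_succ] at h
      simp only [pow_zero, one_mul] at h
      have : 2 * n1 + 1 = 2 * (2 ^ s * (2 * n2 + 1)) := by rw [h]; ring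
      omega
  | succ s ih =>
    intro j2 n1 n2 h
    cases j2 with
    | zero =>
      rw [pow_succ] at h
      simp only [pow_zero, one_mul] at h
      have : 2 * (2 ^ s * (2 * n1 + 1)) = 2 * n2 + 1 := by rw [← h]; ring
      omega
    | succ s' =>
      rw [pow_succ, pow_succ] at h
      have h' : 2 ^ s * (2 * n1 + 1) = 2 ^ s' * (2 * n2 + 1) := by
        have h2 : 2 * (2 ^ s * (2 * n1 + 1)) = 2 * (2 ^ s' * (2 * n2 + 1)) := by
          rw [show 2 * (2 ^ s * (2 * n1 + 1)) = 2 ^ s * 2 * (2 * n1 + 1) by ring, h]; ring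
        omega
      obtain ⟨h1, h2⟩ := ih s' n1 n2 h'
      exact ⟨by omega, h2⟩

/-- Every positive natural is `2^j (2n+1)`. -/
private lemma e_surj (m : ℕ) (hm : m ≠ 0) : ∃ n j : ℕ, 2 ^ j * (2 * n + 1) = m := by
  obtain ⟨j, c, hc, rfl⟩ := Nat.exists_eq_pow_mul_and_not_dvd hm 2 (by norm_num)
  have : c % 2 = 1 := Nat.not_even_iff.mp (fun he => hc he.two_dvd)
  have hc2 : 2 * (c / 2) + 1 = c := by omega
  exact ⟨c / 2, j, by rw [hc2]⟩

/-- Summability of `m ↦ 1 / F_{2^r m}`. -/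
private lemma g_summable (r : ℕ) (hr : 2 ≤ r) :
    Summable (fun m : ℕ => 1 / (Nat.fib (2 ^ r * m) : ℝ)) := by
  apply Summable.of_nonneg_of_le (f := fun m : ℕ => (Phi⁻¹) ^ m)
    (fun m => by positivity) ?_
    (summable_geometric_of_lt_one (inv_nonneg.mpr phi_pos.le) (inv_lt_one_of_one_lt₀ one_lt_phi))
  · intro m
    rcases Nat.eq_zero_or_pos m with rfl | hm
    · simp
    · have h1 : m + 2 ≤ 2 ^ r * m := by
        have h4 : 4 ≤ 2 ^ r := by
          calc 4 = 2 ^ 2 := by norm_num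
          _ ≤ 2 ^ r := Nat.pow_le_pow_right (by norm_num) hr
        nlinarith
      have h2 : Phi ^ m ≤ (Nat.fib (2 ^ r * m) : ℝ) := by
        calc Phi ^ m ≤ (Nat.fib (m + 2) : ℝ) := fib_lower m
        _ ≤ (Nat.fib (2 ^ r * m) : ℝ) := by exact_mod_cast Nat.fib_mono h1
      have := one_div_le_one_div_of_le (phi_pow_pos m) h2
      simpa [one_div, inv_pow] using this


/-- For any integer `r ≥ 2`:
`∑_{n=0}^∞ 1 / (F_{2^r n + 2^{r-1}} Φ^{2^r n + 2^{r-1}}) = ∑_{n=1}^∞ 1 / F_{2^r n}`. -/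
theorem statement19 (r : ℕ) (hr : 2 ≤ r) :
    ∑' n : ℕ, 1 / ((Nat.fib (2 ^ r * n + 2 ^ (r - 1)) : ℝ) *
        Phi ^ (2 ^ r * n + 2 ^ (r - 1))) =
      ∑' n : ℕ, 1 / (Nat.fib (2 ^ r * (n + 1)) : ℝ) := by
  set g : ℕ → ℝ := fun m => 1 / (Nat.fib (2 ^ r * m) : ℝ) with hgdef
  have hgsum : Summable g := g_summable r hr
  set e : ℕ × ℕ → ℕ := fun p => 2 ^ p.2 * (2 * p.1 + 1) with hedef
  have hinj : Function.Injective e := by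
    intro p q h
    obtain ⟨h1, h2⟩ := e_inj_aux p.2 q.2 p.1 q.1 h
    exact Prod.ext_iff.mpr ⟨h2, h1⟩
  have hfsum : Summable (g ∘ e) := hgsum.comp_injective hinj
  -- index arithmetic
  have hidx : ∀ n : ℕ, 2 ^ r * n + 2 ^ (r - 1) = 2 ^ (r - 1) * (2 * n + 1) := by
    intro n
    have h2r : 2 ^ r = 2 ^ (r - 1) * 2 := by
      rw [← pow_succ]
      congr 1
      omega
    rw [h2r]; ring
  -- each LHS term is the tail sum
  have hterm : ∀ n : ℕ,
      HasSum (fun j : ℕ => (g ∘ e) (n, j))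
        (1 / ((Nat.fib (2 ^ (r - 1) * (2 * n + 1)) : ℝ) *
          Phi ^ (2 ^ (r - 1) * (2 * n + 1)))) := by
    intro n
    set k := 2 ^ (r - 1) * (2 * n + 1) with hkdef
    have hkeven : Even k := by
      refine Even.mul_right ?_ _
      rw [Nat.even_pow]
      exact ⟨even_iff_two_dvd.mpr ⟨1, rfl⟩, by omega⟩
    have hk0 : 0 < k := Nat.mul_pos (Nat.pow_pos two_pos) (by omega)
    have hfun : (fun j : ℕ => 1 / (Nat.fib (2 ^ (j + 1) * k) : ℝ))
        = fun j : ℕ => (g ∘ e) (n, j) := by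
      funext j
      have hpow : 2 ^ (j + 1) * 2 ^ (r - 1) = 2 ^ r * 2 ^ j := by
        rw [← pow_add, ← pow_add]
        congr 1
        omega
      have : 2 ^ (j + 1) * k = 2 ^ r * (2 ^ j * (2 * n + 1)) := by
        rw [hkdef, ← mul_assoc, hpow]; ring
      simp only [hgdef, hedef, Function.comp, this]
    have := tail_hasSum k hkeven hk0
    rwa [hfun] at this
  calc ∑' n : ℕ, 1 / ((Nat.fib (2 ^ r * n + 2 ^ (r - 1)) : ℝ) *
        Phi ^ (2 ^ r * n + 2 ^ (r - 1)))
      = ∑' n : ℕ, ∑' j : ℕ, (g ∘ e) (n, j) := by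
        refine tsum_congr fun n => ?_
        rw [hidx n]
        exact ((hterm n).tsum_eq).symm
    _ = ∑' p : ℕ × ℕ, (g ∘ e) p := (hfsum.tsum_prod' fun n => hfsum.prod_factor n).symm
    _ = ∑' m : ℕ, g m := by
        refine hinj.tsum_eq ?_
        intro m hm
        have hm0 : m ≠ 0 := by
          rintro rfl
          simp [hgdef] at hm
        obtain ⟨n', j', hnj⟩ := e_surj m hm0
        exact ⟨(n', j'), hnj⟩
    _ = g 0 + ∑' n : ℕ, g (n + 1) := hgsum.tsum_eq_zero_add
    _ = ∑' n : ℕ, 1 / (Nat.fib (2 ^ r * (n + 1)) : ℝ) := by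
        simp [hgdef]
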